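/- Each of the three elementary necklaces b satisfies max_{r∈ℛ₂(b)} ω(r) = 1, i.e. its bubble dimension is d̃_b = 1. -/

import Mathlib

/-!  Rank-4 tensorial bubbles and Feynman graphs, following
Carrozza–Lahoche–Oriti, "Renormalizable Group Field Theory beyond melonic
diagrams: an example in rank four". -/

open Finset

/-- A rank-4 bubble: a connected bipartite 4-colored regular graph, given by
finite sets of black and white nodes together with, for each color, a perfect
matching (bijection) between black and white nodes. -/
structure Bubble where
  B : Type
  W : Type
  [fB : Fintype B]
  [fW : Fintype W]
  [dB : DecidableEq B]
  [dW : DecidableEq W]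
  /-- for each color `i`, the perfect matching of color `i` -/
  edge : Fin 4 → B ≃ W
  /-- connectedness: the only subsets of nodes closed under colored adjacency
  are `∅` and `univ` -/
  conn : ∀ S : Finset (B ⊕ W),
    (∀ x ∈ S, ∀ y : B ⊕ W,
      (∃ i : Fin 4, (∃ u : B, x = Sum.inl u ∧ y = Sum.inr (edge i u)) ∨
        (∃ u : B, y = Sum.inl u ∧ x = Sum.inr (edge i u))) → y ∈ S) →
    S = ∅ ∨ S = Finset.univ

attribute [instance] Bubble.fB Bubble.fW Bubble.dB Bubble.dW

/-- The valency of a bubble: its total number of nodes. -/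
def Bubble.valency (b : Bubble) : ℕ := Fintype.card b.B + Fintype.card b.W

/-- Isomorphism of bubbles (color-preserving). -/
def Bubble.Iso (b b' : Bubble) : Prop :=
  ∃ (eB : b.B ≃ b'.B) (eW : b.W ≃ b'.W), ∀ (i : Fin 4) (x : b.B),
    eW (b.edge i x) = b'.edge i (eB x)

/-- The elementary 2-valent bubble. -/
def twoValent : Bubble where
  B := PUnit
  W := PUnit
  edge := fun _ => Equiv.refl PUnit
  conn := by
    intro S hS
    rcases S.eq_empty_or_nonempty with h | ⟨x, hx⟩
    · exact Or.inl h
    · right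
      have hadj : ∀ x ∈ S, ∀ y : PUnit.{1} ⊕ PUnit.{1}, (∃ i : Fin 4, (∃ u : PUnit.{1}, x = Sum.inl u ∧ y = Sum.inr (Equiv.refl PUnit u)) ∨
        (∃ u : PUnit.{1}, y = Sum.inl u ∧ x = Sum.inr (Equiv.refl PUnit u))) → y ∈ S := hS
      have hi : Sum.inl PUnit.unit ∈ S ∧ Sum.inr PUnit.unit ∈ S := by
        rcases x with ⟨⟩ | ⟨⟩
        · exact ⟨hx, hadj _ hx _ ⟨0, Or.inl ⟨PUnit.unit, rfl, rfl⟩⟩⟩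
        · exact ⟨hadj _ hx _ ⟨0, Or.inr ⟨PUnit.unit, rfl, rfl⟩⟩, hx⟩
      ext y
      rcases y with ⟨⟩ | ⟨⟩ <;> simp [hi.1, hi.2]

/-- The elementary necklace in which color `1` (index `0`) is paired with the
color of index `ℓ.succ`, `ℓ : Fin 3`: its four nodes form a 4-cycle along which
double lines with the colors `{0, ℓ.succ}` alternate with double lines carrying
the complementary pair of colors. -/
def elemNecklace (ℓ : Fin 3) : Bubble where
  B := Fin 2
  W := Fin 2
  edge := fun c => if c = 0 ∨ c = ℓ.succ then Equiv.refl (Fin 2) else Equiv.swap 0 1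
  conn := by fin_cases ℓ <;> decide

/-- The 4-valent melonic bubble of color `ℓ`. -/
def melon4 (ℓ : Fin 4) : Bubble where
  B := Fin 2
  W := Fin 2
  edge := fun c => if c = ℓ then Equiv.swap 0 1 else Equiv.refl (Fin 2)
  conn := by fin_cases ℓ <;> decide

/-- The colored matchings of the connected sum of `b₁` and `b₂` at a black node
`n₁` of `b₁` and a white node `n₂` of `b₂`: delete `n₁, n₂` and join the
dangling colored half-lines according to their colors. -/
def connSumEdge (b₁ b₂ : Bubble) (n₁ : b₁.B) (n₂ : b₂.W) (i : Fin 4) :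
    ({x : b₁.B // x ≠ n₁} ⊕ b₂.B) → (b₁.W ⊕ {y : b₂.W // y ≠ n₂})
  | Sum.inl x => Sum.inl (b₁.edge i x.1)
  | Sum.inr y =>
      if h : b₂.edge i y = n₂ then Sum.inl (b₁.edge i n₁)
      else Sum.inr ⟨b₂.edge i y, h⟩

/-- `b₃` is the connected sum of `b₁` and `b₂` at `n₁` and `n₂`. -/
def IsConnSumAt (b₃ b₁ b₂ : Bubble) (n₁ : b₁.B) (n₂ : b₂.W) : Prop :=
  ∃ (eB : b₃.B ≃ ({x : b₁.B // x ≠ n₁} ⊕ b₂.B))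
    (eW : b₃.W ≃ (b₁.W ⊕ {y : b₂.W // y ≠ n₂})),
    ∀ (i : Fin 4) (x : b₃.B), eW (b₃.edge i x) = connSumEdge b₁ b₂ n₁ n₂ i (eB x)

/-- The set `𝔹` of necklace bubbles: the 2-valent bubble together with
everything generated by the three elementary necklaces under connected sums. -/
inductive IsNecklace : Bubble → Prop
  | two {b : Bubble} : b.Iso twoValent → IsNecklace b
  | elem {b : Bubble} (ℓ : Fin 3) : b.Iso (elemNecklace ℓ) → IsNecklace b
  | sum {b b₁ b₂ : Bubble} (n₁ : b₁.B) (n₂ : b₂.W) :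
      IsNecklace b₁ → IsNecklace b₂ → IsConnSumAt b b₁ b₂ n₁ n₂ → IsNecklace b

/-- `(n, m)` is a `k`-dipole of the bubble `b`: `n` and `m` are joined by
exactly `k` colored lines. -/
def Bubble.IsDipole (b : Bubble) (n : b.B) (m : b.W) (k : ℕ) : Prop :=
  (Finset.univ.filter fun i : Fin 4 => b.edge i n = m).card = k

/-- The colored matchings of the bubble obtained from `b` by contracting the
pair of nodes `(n, m)`: delete `n`, `m` and all colored lines between them, and
reconnect the dangling colored half-lines according to their colors. -/
def contractEdge (b : Bubble) (n : b.B) (m : b.W) (i : Fin 4)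
    (x : {x : b.B // x ≠ n}) : {y : b.W // y ≠ m} :=
  if h : b.edge i x.1 = m then
    ⟨b.edge i n, fun hm => x.2 ((b.edge i).injective (h.trans hm.symm))⟩
  else ⟨b.edge i x.1, h⟩

/-- `b'` is the bubble obtained from `b` by contracting the dipole `(n, m)`. -/
def Bubble.IsContractionAt (b' b : Bubble) (n : b.B) (m : b.W) : Prop :=
  ∃ (eB : b'.B ≃ {x : b.B // x ≠ n}) (eW : b'.W ≃ {y : b.W // y ≠ m}),
    ∀ (i : Fin 4) (x : b'.B), eW (b'.edge i x) = contractEdge b n m i (eB x)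

/-- A Feynman graph: a finite collection of bubbles (the vertices) together
with 0-lines, each joining a black node to a white node, every node being
incident to at most one 0-line. Nodes not incident to a 0-line carry external
legs. -/
structure FGraph where
  V : Type
  [fV : Fintype V]
  [dV : DecidableEq V]
  bub : V → Bubble
  L : Type
  [fL : Fintype L]
  [dL : DecidableEq L]
  /-- the black endpoint of a 0-line -/
  lb : L → Σ v : V, (bub v).B
  /-- the white endpoint of a 0-line -/
  lw : L → Σ v : V, (bub v).W
  lb_inj : Function.Injective lb
  lw_inj : Function.Injective lw

attribute [instance] FGraph.fV FGraph.dV FGraph.fL FGraph.dL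

/-- The black nodes of a Feynman graph. -/
abbrev FGraph.NB (G : FGraph) : Type := Σ v : G.V, (G.bub v).B

/-- The white nodes of a Feynman graph. -/
abbrev FGraph.NW (G : FGraph) : Type := Σ v : G.V, (G.bub v).W

/-- The colored line of color `i` leaving the black node `x`. -/
def FGraph.colorMap (G : FGraph) (i : Fin 4) (x : G.NB) : G.NW :=
  ⟨x.1, (G.bub x.1).edge i x.2⟩

/-- `L(𝒢)`: the number of 0-lines. -/
def FGraph.numL (G : FGraph) : ℕ := Fintype.card G.L

/-- `V(𝒢)`: the number of vertices (bubbles). -/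
def FGraph.numV (G : FGraph) : ℕ := Fintype.card G.V

/-- `N(𝒢)`: the number of external legs. -/
def FGraph.numN (G : FGraph) : ℕ :=
  (Fintype.card G.NB - Fintype.card G.L) + (Fintype.card G.NW - Fintype.card G.L)

/-- `l'` is the successor of `l` in the face of color `i`: the white endpoint
of `l'` is joined by a color-`i` line to the black endpoint of `l`. -/
def FGraph.NextRel (G : FGraph) (i : Fin 4) (l l' : G.L) : Prop :=
  G.lw l' = G.colorMap i (G.lb l)

/-- `C` is (the set of 0-lines of) an internal face of color `i`: a cycle of
the successor relation, i.e. a minimal nonempty set in which every 0-line has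
its successor. -/
def FGraph.IsFace (G : FGraph) (i : Fin 4) (C : Finset G.L) : Prop :=
  C.Nonempty ∧ (∀ l ∈ C, ∃ l' ∈ C, G.NextRel i l l') ∧
    ∀ D : Finset G.L, D ⊆ C → D.Nonempty →
      (∀ l ∈ D, ∃ l' ∈ D, G.NextRel i l l') → D = C

/-- `F(𝒢)`: the number of internal faces. -/
noncomputable def FGraph.numF (G : FGraph) : ℕ :=
  Set.ncard {p : Fin 4 × Finset G.L | G.IsFace p.1 p.2}

open Classical in
/-- The line/face incidence matrix `ε`, with internal faces coherently oriented
so that every 0-line occurs in a face it belongs to with matching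
orientation. -/
noncomputable def FGraph.epsMat (G : FGraph) :
    Matrix G.L (Fin 4 × Finset G.L) ℚ :=
  fun l p => if G.IsFace p.1 p.2 ∧ l ∈ p.2 then 1 else 0

/-- `R(𝒢)`: the rank of the incidence matrix `ε` over `ℚ`. -/
noncomputable def FGraph.numR (G : FGraph) : ℕ := G.epsMat.rank

/-- The Abelian degree of divergence `ω(𝒢) = -2L + 3(F - R)`. -/
noncomputable def FGraph.omega (G : FGraph) : ℤ :=
  -2 * (G.numL : ℤ) + 3 * ((G.numF : ℤ) - (G.numR : ℤ))

/-- `ρ(𝒢) = (L - V + 1) - (F - R)`. -/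
noncomputable def FGraph.rho (G : FGraph) : ℤ :=
  ((G.numL : ℤ) - (G.numV : ℤ) + 1) - ((G.numF : ℤ) - (G.numR : ℤ))

/-- Adjacency of the vertices `a, b` through a 0-line belonging to `T`. -/
def FGraph.VAdjOn (G : FGraph) (T : Finset G.L) (a b : G.V) : Prop :=
  ∃ l ∈ T, ((G.lb l).1 = a ∧ (G.lw l).1 = b) ∨ ((G.lb l).1 = b ∧ (G.lw l).1 = a)

/-- Adjacency of the vertices `a, b` through some 0-line. -/
def FGraph.VAdj (G : FGraph) (a b : G.V) : Prop :=
  ∃ l : G.L, ((G.lb l).1 = a ∧ (G.lw l).1 = b) ∨ ((G.lb l).1 = b ∧ (G.lw l).1 = a)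

/-- Connectedness of a Feynman graph. -/
def FGraph.Connected (G : FGraph) : Prop :=
  Nonempty G.V ∧ ∀ v v' : G.V, Relation.ReflTransGen G.VAdj v v'

/-- `T` is a spanning tree of 0-lines of `𝒢`. -/
def FGraph.IsSpanningTree (G : FGraph) (T : Finset G.L) : Prop :=
  T.card + 1 = Fintype.card G.V ∧
    ∀ v v' : G.V, Relation.ReflTransGen (G.VAdjOn T) v v'

/-- Rerouting of a color-`i` half-line through the contracted lines `T`:
as long as the reached white node is an endpoint of a contracted line, jump to
the color-`i` line leaving the black endpoint of that contracted line. -/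
noncomputable def FGraph.reroute (G : FGraph) (T : Finset G.L) (i : Fin 4) :
    ℕ → G.NW → G.NW
  | 0, w => w
  | fuel + 1, w =>
      if h : ∃ l ∈ T, G.lw l = w then
        G.reroute T i fuel (G.colorMap i (G.lb h.choose))
      else w

/-- `G'` is the Feynman graph obtained from `G` by contracting all the 0-lines
of `T` (deleting their end nodes and the colored lines between them, and
reconnecting the dangling colored half-lines by colors). -/
def FGraph.IsQuotientBy (G' G : FGraph) (T : Finset G.L) : Prop :=
  ∃ (eL : G'.L ≃ {l : G.L // l ∉ T})
    (eB : G'.NB ≃ {x : G.NB // ∀ l ∈ T, G.lb l ≠ x})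
    (eW : G'.NW ≃ {y : G.NW // ∀ l ∈ T, G.lw l ≠ y}),
    (∀ l' : G'.L,
      (eB (G'.lb l')).1 = G.lb (eL l').1 ∧ (eW (G'.lw l')).1 = G.lw (eL l').1) ∧
    ∀ (i : Fin 4) (x : G'.NB),
      (eW (G'.colorMap i x)).1 = G.reroute T i T.card (G.colorMap i (eB x).1)

/-- `G'` is the Feynman graph obtained from `G` by contracting the 0-line `l`. -/
def FGraph.IsContractionAt (G' G : FGraph) (l : G.L) : Prop :=
  FGraph.IsQuotientBy G' G {l}

/-- The 0-line `l` is a `k`-dipole: its two end nodes are joined by exactly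
`k - 1` colored lines. -/
def FGraph.IsDipoleLine (G : FGraph) (l : G.L) (k : ℕ) : Prop :=
  (Finset.univ.filter fun i : Fin 4 => G.colorMap i (G.lb l) = G.lw l).card = k - 1

/-- A Feynman graph is 3-dipole contractible if its 0-lines can be contracted
one after the other, each being a 3-dipole at the moment of its contraction. -/
inductive DipoleContractible : FGraph → Prop
  | nil {G : FGraph} : Fintype.card G.L = 0 → DipoleContractible G
  | step {G G' : FGraph} (l : G.L) : G.IsDipoleLine l 3 →
      FGraph.IsContractionAt G' G l → DipoleContractible G' → DipoleContractible G

/-- A necklace graph: a connected Feynman graph all of whose vertices are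
necklace bubbles. -/
def FGraph.IsNecklaceGraph (G : FGraph) : Prop :=
  G.Connected ∧ ∀ v : G.V, IsNecklace (G.bub v)

/-- `r ∈ ℛ₂(b)`: a Feynman graph with a single vertex `b` and exactly two
external legs. -/
def IsR2 (r : FGraph) (b : Bubble) : Prop :=
  Fintype.card r.V = 1 ∧ (∀ v : r.V, (r.bub v).Iso b) ∧ r.numN = 2

/-- `M = max_{r ∈ ℛ₂(b)} ω(r)`. -/
def IsMaxOmega2 (b : Bubble) (M : ℤ) : Prop :=
  (∃ r : FGraph, IsR2 r b ∧ r.omega = M) ∧ ∀ r : FGraph, IsR2 r b → r.omega ≤ M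

/-- The bubble dimension `d̃_b = 2 - max_{r ∈ ℛ₂(b)} ω(r)`. -/
def HasBubbleDim (b : Bubble) (d : ℤ) : Prop :=
  ∃ M : ℤ, IsMaxOmega2 b M ∧ d = 2 - M

open Classical in
/-- The (unique, if any) successor of the 0-line `l` in the face of color `i`. -/
noncomputable def FGraph.nextL (G : FGraph) (i : Fin 4) (l : G.L) : Option G.L :=
  if h : ∃ l' : G.L, G.NextRel i l l' then some h.choose else none

/-- The ordered product of the group elements attached to the `k` consecutive
0-lines of the face of color `i` starting at `l`. -/
noncomputable def FGraph.holPath (G : FGraph) {Γ : Type*} [Monoid Γ]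
    (h : G.L → Γ) (i : Fin 4) : ℕ → G.L → Γ
  | 0, _ => 1
  | k + 1, l => h l * (G.nextL i l).elim 1 (fun l' => FGraph.holPath G h i k l')

/-- In each elementary necklace, any black node and any white node are joined
by exactly two colored lines. -/
lemma elemNecklace_two_lines (ℓ : Fin 3) (b : (elemNecklace ℓ).B) (w : (elemNecklace ℓ).W) :
    (Finset.univ.filter fun i : Fin 4 => (elemNecklace ℓ).edge i b = w).card = 2 := by
  fin_cases ℓ <;> fin_cases b <;> fin_cases w <;> decide

/-- Any 2-point graph on an elementary necklace has `ω = 1`. -/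
lemma isR2_elemNecklace_omega (ℓ : Fin 3) (r : FGraph)
    (hr : IsR2 r (elemNecklace ℓ)) : r.omega = 1 := by
  classical
  obtain ⟨hV, hbub, hN⟩ := hr
  have hVsub : Subsingleton r.V :=
    Fintype.card_le_one_iff_subsingleton.mp (le_of_eq hV)
  have hcardB : ∀ v : r.V, Fintype.card (r.bub v).B = 2 := by
    intro v; obtain ⟨eB, _, _⟩ := hbub v
    rw [Fintype.card_congr eB]; rfl
  have hcardW : ∀ v : r.V, Fintype.card (r.bub v).W = 2 := by
    intro v; obtain ⟨_, eW, _⟩ := hbub v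
    rw [Fintype.card_congr eW]; rfl
  have hNB : Fintype.card r.NB = 2 := by
    rw [Fintype.card_sigma, Finset.sum_congr rfl fun v _ => hcardB v]
    simp [hV]
  have hNW : Fintype.card r.NW = 2 := by
    rw [Fintype.card_sigma, Finset.sum_congr rfl fun v _ => hcardW v]
    simp [hV]
  have hL : Fintype.card r.L = 1 := by
    have h1 : Fintype.card r.L ≤ 2 := hNB ▸ Fintype.card_le_of_injective _ r.lb_inj
    unfold FGraph.numN at hN
    omega
  obtain ⟨l₀, hl₀⟩ := Fintype.card_eq_one_iff.mp hL
  -- classification of faces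
  have hface : ∀ (i : Fin 4) (C : Finset r.L),
      r.IsFace i C ↔ C = {l₀} ∧ r.NextRel i l₀ l₀ := by
    intro i C
    constructor
    · rintro ⟨hne, hstep, -⟩
      have hC : C = {l₀} := by
        obtain ⟨x, hx⟩ := hne
        have hxl := hl₀ x
        subst hxl
        exact Finset.eq_singleton_iff_unique_mem.mpr ⟨hx, fun y _ => hl₀ y⟩
      subst hC
      obtain ⟨l', hl', hn⟩ := hstep l₀ (Finset.mem_singleton_self l₀)
      rw [Finset.mem_singleton] at hl'
      subst hl'
      exact ⟨rfl, hn⟩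
    · rintro ⟨rfl, hnext⟩
      refine ⟨⟨l₀, Finset.mem_singleton_self l₀⟩, ?_, ?_⟩
      · intro l hl
        rw [Finset.mem_singleton] at hl
        rw [hl]
        exact ⟨l₀, Finset.mem_singleton_self l₀, hnext⟩
      · intro D hD hDne _
        obtain ⟨x, hx⟩ := hDne
        have hx' := hD hx
        rw [Finset.mem_singleton] at hx'
        subst hx'
        exact Finset.eq_singleton_iff_unique_mem.mpr
          ⟨hx, fun y hy => Finset.mem_singleton.mp (hD hy)⟩
  -- the endpoints of the unique line
  rcases hb : r.lb l₀ with ⟨vb, n⟩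
  rcases hw : r.lw l₀ with ⟨vw, m⟩
  have hv : vb = vw := Subsingleton.elim vb vw
  subst hv
  have hnext_iff : ∀ i : Fin 4, r.NextRel i l₀ l₀ ↔ (r.bub vb).edge i n = m := by
    intro i
    unfold FGraph.NextRel FGraph.colorMap
    rw [hb, hw]
    constructor
    · intro h
      exact (eq_of_heq (Sigma.mk.inj_iff.mp h).2).symm
    · intro h; rw [h]
  obtain ⟨eB, eW, he⟩ := hbub vb
  have hiff : ∀ i : Fin 4,
      r.NextRel i l₀ l₀ ↔ (elemNecklace ℓ).edge i (eB n) = eW m := by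
    intro i
    rw [hnext_iff i, ← he i n]
    exact ⟨fun h => by rw [h], fun h => eW.injective h⟩
  -- the number of internal faces is 2
  have hFset : {p : Fin 4 × Finset r.L | r.IsFace p.1 p.2}
      = (fun i => (i, ({l₀} : Finset r.L))) ''
          {i : Fin 4 | (elemNecklace ℓ).edge i (eB n) = eW m} := by
    ext ⟨i, C⟩
    simp only [Set.mem_setOf_eq, Set.mem_image, hface]
    constructor
    · rintro ⟨rfl, h⟩
      exact ⟨i, (hiff i).mp h, rfl⟩
    · rintro ⟨j, hj, hEq⟩
      have h1 : j = i := congrArg Prod.fst hEq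
      have h2 : ({l₀} : Finset r.L) = C := congrArg Prod.snd hEq
      subst h1
      subst h2
      exact ⟨rfl, (hiff j).mpr hj⟩
  have hinj : Function.Injective (fun i : Fin 4 => (i, ({l₀} : Finset r.L))) :=
    fun a b h => congrArg Prod.fst h
  have hF : r.numF = 2 := by
    unfold FGraph.numF
    rw [hFset, Set.ncard_image_of_injective _ hinj,
      Set.ncard_eq_toFinset_card', Set.toFinset_setOf]
    exact elemNecklace_two_lines ℓ (eB n) (eW m)
  -- the rank of the incidence matrix is 1
  obtain ⟨i₀, hi₀⟩ : ∃ i : Fin 4, (elemNecklace ℓ).edge i (eB n) = eW m := by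
    have := elemNecklace_two_lines ℓ (eB n) (eW m)
    have hpos : 0 < (Finset.univ.filter
        fun i : Fin 4 => (elemNecklace ℓ).edge i (eB n) = eW m).card := by omega
    obtain ⟨i, hi⟩ := Finset.card_pos.mp hpos
    exact ⟨i, (Finset.mem_filter.mp hi).2⟩
  have hface₀ : r.IsFace i₀ {l₀} := (hface i₀ {l₀}).mpr ⟨rfl, (hiff i₀).mpr hi₀⟩
  have heps : r.epsMat l₀ (i₀, ({l₀} : Finset r.L)) = 1 := by
    unfold FGraph.epsMat
    exact if_pos ⟨hface₀, Finset.mem_singleton_self l₀⟩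
  have hne : r.epsMat ≠ 0 := by
    intro h0
    rw [h0] at heps
    simp at heps
  have hrank_pos : 0 < r.epsMat.rank := by
    rw [Matrix.rank]
    rw [Module.finrank_pos_iff]
    refine ⟨⟨⟨r.epsMat.mulVecLin (Pi.single (i₀, ({l₀} : Finset r.L)) 1),
      LinearMap.mem_range_self _ _⟩, 0, ?_⟩⟩
    intro hcontr
    have h2 := congrArg Subtype.val hcontr
    simp only [ZeroMemClass.coe_zero] at h2
    have h3 := congrFun h2 l₀
    rw [Matrix.mulVecLin_apply, Matrix.mulVec_single] at h3
    simp only [mul_one, Pi.zero_apply, Pi.smul_apply, MulOpposite.op_one, one_smul, Matrix.col_apply] at h3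
    rw [heps] at h3
    exact one_ne_zero h3
  have hrank_le : r.epsMat.rank ≤ 1 := hL ▸ r.epsMat.rank_le_card_height
  have hR : r.numR = 1 := by
    unfold FGraph.numR
    omega
  unfold FGraph.omega FGraph.numL
  rw [hF, hR, hL]
  norm_num

/-- A one-line two-point graph on the elementary necklace. -/
def necklaceR2 (ℓ : Fin 3) : FGraph where
  V := PUnit
  bub := fun _ => elemNecklace ℓ
  L := PUnit
  lb := fun _ => ⟨PUnit.unit, (0 : Fin 2)⟩
  lw := fun _ => ⟨PUnit.unit, (0 : Fin 2)⟩
  lb_inj := fun a b _ => Subsingleton.elim a b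
  lw_inj := fun a b _ => Subsingleton.elim a b

lemma necklaceR2_isR2 (ℓ : Fin 3) : IsR2 (necklaceR2 ℓ) (elemNecklace ℓ) := by
  refine ⟨rfl, fun v => ⟨Equiv.refl _, Equiv.refl _, fun i x => rfl⟩, ?_⟩
  unfold FGraph.numN
  have hB : Fintype.card (necklaceR2 ℓ).NB = 2 := by
    rw [Fintype.card_sigma]; rfl
  have hW : Fintype.card (necklaceR2 ℓ).NW = 2 := by
    rw [Fintype.card_sigma]; rfl
  have hL : Fintype.card (necklaceR2 ℓ).L = 1 := rfl
  rw [hB, hW, hL]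

/-- Each of the three elementary necklaces has `max_{r ∈ ℛ₂} ω(r) = 1`, i.e.
bubble dimension `d̃ = 1`. -/
theorem elemNecklace_bubbleDim (ℓ : Fin 3) :
    IsMaxOmega2 (elemNecklace ℓ) 1 ∧ HasBubbleDim (elemNecklace ℓ) 1 := by
  have hmax : IsMaxOmega2 (elemNecklace ℓ) 1 := by
    constructor
    · exact ⟨necklaceR2 ℓ, necklaceR2_isR2 ℓ,
        isR2_elemNecklace_omega ℓ _ (necklaceR2_isR2 ℓ)⟩
    · intro r hr
      exact le_of_eq (isR2_elemNecklace_omega ℓ r hr)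
  exact ⟨hmax, 1, hmax, by norm_num⟩
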